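/- Let Q be a real v×s matrix with s ≥ v−1, Qᵀ 1_v = 0_s, and rank(Q) = v−1. Then the uniform design w̄ = (1/v,…,1/v) minimizes the pseudo-determinant Det(Qᵀ diag(w)⁻¹ Q) over all designs w on v treatments; that is, Det(Qᵀ diag(w)⁻¹ Q) ≥ Det(Qᵀ diag(w̄)⁻¹ Q) for every design w. -/

import Mathlib

open Matrix Polynomial

/-- The pseudo-determinant of a matrix: the product of the nonzero roots of its
characteristic polynomial, counted with algebraic multiplicity. For a real symmetric
positive semidefinite matrix (whose characteristic polynomial splits over ℝ) this is
the product of its nonzero eigenvalues with algebraic multiplicity. -/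
noncomputable def pseudoDet {n : ℕ} (A : Matrix (Fin n) (Fin n) ℝ) : ℝ :=
  (A.charpoly.roots.filter (fun r => r ≠ 0)).prod

local notation "φ" => algebraMap (Polynomial ℝ) (FractionRing (Polynomial ℝ))

lemma phi_inj : Function.Injective (φ) := IsFractionRing.injective _ _

lemma phi_X_ne : (φ X) ≠ 0 := by
  rw [map_ne_zero_iff _ phi_inj]; exact X_ne_zero

lemma phi_charpoly {k : Type*} [Fintype k] [DecidableEq k] (N : Matrix k k ℝ) :
    φ N.charpoly
      = (φ X) ^ (Fintype.card k)
        * det (1 - (φ X)⁻¹ • N.map ⇑((φ).comp (C : ℝ →+* Polynomial ℝ))) := by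
  have h1 : (charmatrix N).map (φ)
      = (φ X) • (1 : Matrix k k (FractionRing (Polynomial ℝ)))
        - N.map ⇑((φ).comp (C : ℝ →+* Polynomial ℝ)) := by
    ext i j
    by_cases h : i = j
    · subst h
      simp [charmatrix_apply_eq, Matrix.map_apply, Matrix.one_apply, Algebra.smul_def, Matrix.algebraMap_matrix_apply]
    · simp [charmatrix_apply_ne _ _ _ h, Matrix.map_apply, Matrix.one_apply_ne h]
  have h2 : (φ X) • (1 : Matrix k k (FractionRing (Polynomial ℝ)))
        - N.map ⇑((φ).comp (C : ℝ →+* Polynomial ℝ))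
      = (φ X) • ((1 : Matrix k k (FractionRing (Polynomial ℝ)))
          - (φ X)⁻¹ • N.map ⇑((φ).comp (C : ℝ →+* Polynomial ℝ))) := by
    rw [smul_sub, smul_smul, mul_inv_cancel₀ phi_X_ne, one_smul]
  rw [Matrix.charpoly, RingHom.map_det, RingHom.mapMatrix_apply, h1, h2, det_smul]

lemma charpoly_mul_X_pow {m n : Type*} [Fintype m] [Fintype n] [DecidableEq m] [DecidableEq n]
    (A : Matrix m n ℝ) (B : Matrix n m ℝ) :
    (A * B).charpoly * X ^ (Fintype.card n) = (B * A).charpoly * X ^ (Fintype.card m) := by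
  apply phi_inj
  rw [_root_.map_mul, _root_.map_mul, map_pow, map_pow, phi_charpoly, phi_charpoly]
  set ψ : ℝ →+* FractionRing (Polynomial ℝ) := (φ).comp (C : ℝ →+* Polynomial ℝ)
  rw [Matrix.map_mul (f := ψ), Matrix.map_mul (f := ψ)]
  set A' := A.map ⇑ψ
  set B' := B.map ⇑ψ
  set x := φ X
  have key : det (1 - x⁻¹ • (A' * B')) = det (1 - x⁻¹ • (B' * A')) := by
    have e1 : (1 : Matrix m m _) - x⁻¹ • (A' * B') = 1 + (-(x⁻¹ • A')) * B' := by
      rw [Matrix.neg_mul, Matrix.smul_mul, sub_eq_add_neg]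
    have e2 : (1 : Matrix n n _) - x⁻¹ • (B' * A') = 1 + B' * (-(x⁻¹ • A')) := by
      rw [Matrix.mul_neg, Matrix.mul_smul, sub_eq_add_neg]
    rw [e1, e2, det_one_add_mul_comm]
  rw [key]; ring

lemma charpoly_comm {k : Type*} [Fintype k] [DecidableEq k] (M N : Matrix k k ℝ) :
    (M * N).charpoly = (N * M).charpoly :=
  mul_right_cancel₀ (pow_ne_zero _ X_ne_zero) (charpoly_mul_X_pow M N)

lemma filter_roots_charpoly_mul_comm {m n : Type*} [Fintype m] [Fintype n] [DecidableEq m]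
    [DecidableEq n] (A : Matrix m n ℝ) (B : Matrix n m ℝ) :
    ((A * B).charpoly.roots.filter (fun r => r ≠ 0))
      = ((B * A).charpoly.roots.filter (fun r => r ≠ 0)) := by
  have h := congrArg Polynomial.roots (charpoly_mul_X_pow A B)
  rw [roots_mul (mul_ne_zero ((A*B).charpoly_monic.ne_zero) (pow_ne_zero _ X_ne_zero)),
    roots_mul (mul_ne_zero ((B*A).charpoly_monic.ne_zero) (pow_ne_zero _ X_ne_zero)),
    roots_pow, roots_pow, roots_X] at h
  have h2 := congrArg (Multiset.filter (fun r => r ≠ 0)) h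
  have hz : ∀ k : ℕ, Multiset.filter (fun x => ¬x = (0:ℝ)) (Multiset.replicate k 0) = 0 := by
    intro k
    rw [Multiset.filter_eq_nil]
    intro a ha
    simp [Multiset.eq_of_mem_replicate ha]
  simpa [Multiset.filter_add, Multiset.nsmul_singleton, hz] using h2

lemma charpoly_diagonal {k : Type*} [Fintype k] [DecidableEq k] (d : k → ℝ) :
    (diagonal d).charpoly = ∏ i, (X - C (d i)) := by
  have h : charmatrix (diagonal d) = diagonal (fun i => X - C (d i)) := by
    ext i j
    by_cases h : i = j
    · subst h; simp [charmatrix_apply_eq]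
    · simp [charmatrix_apply_ne _ _ _ h, diagonal_apply_ne _ h]
  rw [Matrix.charpoly, h, det_diagonal]

lemma isHermitian_charpoly {k : Type*} [Fintype k] [DecidableEq k] {A : Matrix k k ℝ}
    (hA : A.IsHermitian) : A.charpoly = ∏ i, (X - C (hA.eigenvalues i)) := by
  have hspec := hA.spectral_theorem
  set U : Matrix k k ℝ := (hA.eigenvectorUnitary : Matrix k k ℝ) with hUdef
  have hU : star U * U = 1 := Unitary.star_mul_self_of_mem hA.eigenvectorUnitary.2
  have hd : (RCLike.ofReal ∘ hA.eigenvalues : k → ℝ) = hA.eigenvalues := by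
    funext i; simp
  have : A.charpoly = (diagonal hA.eigenvalues).charpoly := by
    calc A.charpoly = ((U * diagonal (RCLike.ofReal ∘ hA.eigenvalues)) * star U).charpoly := by
          conv_lhs => rw [hspec, Unitary.conjStarAlgAut_apply]
      _ = (star U * (U * diagonal (RCLike.ofReal ∘ hA.eigenvalues))).charpoly :=
          charpoly_comm _ _
      _ = (diagonal hA.eigenvalues).charpoly := by
          rw [← Matrix.mul_assoc, hU, Matrix.one_mul, hd]
  rw [this, _root_.charpoly_diagonal]

lemma isHermitian_charpoly_roots {k : Type*} [Fintype k] [DecidableEq k] {A : Matrix k k ℝ}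
    (hA : A.IsHermitian) : A.charpoly.roots = Finset.univ.val.map hA.eigenvalues := by
  rw [isHermitian_charpoly hA]
  have : (∏ i, (X - C (hA.eigenvalues i)))
      = ((Finset.univ.val.map hA.eigenvalues).map (fun a => X - C a)).prod := by
    rw [Multiset.map_map]
    rfl
  rw [this, roots_multiset_prod_X_sub_C]

lemma coeff_one_det {v : ℕ} (w : Fin v → ℝ) (M : Matrix (Fin v) (Fin v) ℝ) :
    (det ((X : ℝ[X]) • (diagonal w).map (C : ℝ →+* ℝ[X]) - M.map C)).coeff 1
      = ∑ i, w i * ((-M).adjugate i i) := by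
  classical
  set N : Matrix (Fin v) (Fin v) ℝ[X] :=
    (X : ℝ[X]) • (diagonal w).map (C : ℝ →+* ℝ[X]) - M.map C with hNdef
  set f := (Matrix.detRowAlternating :
      ((Fin v) → ℝ[X]) [⋀^(Fin v)]→ₗ[ℝ[X]] ℝ[X]).toMultilinearMap with hfdef
  set a : Fin v → (Fin v → ℝ[X]) := fun i j => (X : ℝ[X]) * C (diagonal w i j) with hadef
  set b : Fin v → (Fin v → ℝ[X]) := fun i j => C ((-M) i j) with hbdef
  have hN : (fun i => N i) = a + b := by
    funext i j
    simp only [hNdef, Matrix.sub_apply, Matrix.smul_apply, Matrix.map_apply, Pi.add_apply,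
      hadef, hbdef, smul_eq_mul, Matrix.neg_apply, map_neg]
    ring
  have hdet : det N = f (a + b) := by
    rw [← hN]; rfl
  rw [hdet, MultilinearMap.map_add_univ]
  -- define real matrices G s
  set G : Finset (Fin v) → Matrix (Fin v) (Fin v) ℝ :=
    fun s => Matrix.of (fun i => if i ∈ s then Pi.single i (1:ℝ) else (-M) i) with hGdef
  have hterm : ∀ s : Finset (Fin v),
      f (s.piecewise a b) = (X : ℝ[X]) ^ s.card * C ((∏ i ∈ s, w i) * det (G s)) := by
    intro s
    set m : Fin v → (Fin v → ℝ[X]) :=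
      s.piecewise (fun i => Pi.single i (1:ℝ[X])) b with hmdef
    set c : Fin v → ℝ[X] := fun i => (X : ℝ[X]) * C (w i) with hcdef
    have hpc : s.piecewise a b = s.piecewise (fun i => c i • m i) m := by
      funext i
      by_cases hi : i ∈ s
      · rw [Finset.piecewise_eq_of_mem _ _ _ hi, Finset.piecewise_eq_of_mem _ _ _ hi]
        funext j
        simp only [hadef, hcdef, hmdef, Finset.piecewise_eq_of_mem _ _ _ hi, Pi.smul_apply,
          smul_eq_mul]
        by_cases hj : j = i
        · subst hj; simp [Matrix.diagonal_apply_eq]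
        · simp [Matrix.diagonal_apply_ne' _ hj, Pi.single_eq_of_ne hj]
      · rw [Finset.piecewise_eq_of_notMem _ _ _ hi, Finset.piecewise_eq_of_notMem _ _ _ hi,
          hmdef, Finset.piecewise_eq_of_notMem _ _ _ hi]
    have hm : f m = C (det (G s)) := by
      have h1 : m = fun i => ((G s).map (C : ℝ →+* ℝ[X])) i := by
        funext i j
        by_cases hi : i ∈ s
        · simp only [hmdef, Finset.piecewise_eq_of_mem _ _ _ hi, hGdef, Matrix.map_apply,
            Matrix.of_apply, if_pos hi]
          by_cases hj : j = i
          · subst hj; simp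
          · simp [Pi.single_eq_of_ne hj]
        · simp only [hmdef, Finset.piecewise_eq_of_notMem _ _ _ hi, hGdef, Matrix.map_apply,
            Matrix.of_apply, if_neg hi, hbdef]
      rw [h1]
      have h2 : f (fun i => ((G s).map (C : ℝ →+* ℝ[X])) i)
          = det ((G s).map (C : ℝ →+* ℝ[X])) := rfl
      rw [h2, ← RingHom.mapMatrix_apply, ← RingHom.map_det]
    rw [hpc, MultilinearMap.map_piecewise_smul, hm]
    rw [smul_eq_mul, hcdef]
    rw [Finset.prod_mul_distrib, Finset.prod_const, ← map_prod]
    rw [_root_.map_mul C]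
    ring
  have hcoeff : ∀ s : Finset (Fin v),
      (f (s.piecewise a b)).coeff 1
        = if s.card = 1 then (∏ i ∈ s, w i) * det (G s) else 0 := by
    intro s
    rw [hterm s, mul_comm, coeff_C_mul, coeff_X_pow]
    by_cases h : s.card = 1
    · simp [h]
    · simp [Ne.symm h, h]
  rw [Polynomial.finset_sum_coeff]
  rw [Finset.sum_congr rfl (fun s _ => hcoeff s)]
  rw [Finset.sum_ite, Finset.sum_const_zero, add_zero]
  have himg : (Finset.univ.filter (fun s : Finset (Fin v) => s.card = 1))
      = Finset.univ.image (fun i : Fin v => ({i} : Finset (Fin v))) := by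
    ext s
    simp [Finset.card_eq_one, eq_comm]
  rw [himg, Finset.sum_image (fun i _ j _ h => Finset.singleton_injective h)]
  refine Finset.sum_congr rfl (fun i _ => ?_)
  have hG : G {i} = (-M).updateRow i (Pi.single i 1) := by
    ext k j
    by_cases hk : k = i
    · subst hk; simp [hGdef, Matrix.updateRow_apply]
    · simp [hGdef, Matrix.updateRow_apply, hk]
  rw [Finset.prod_singleton, hG, Matrix.adjugate_apply]

lemma key (v s : ℕ) (hv : 0 < v) (Q : Matrix (Fin v) (Fin s) ℝ)
    (hrank : Q.rank = v - 1)
    (c : ℝ) (hc : ∀ i j, (Q * Qᵀ).adjugate i j = c)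
    (w : Fin v → ℝ) (hw : ∀ i, 0 < w i) (hw1 : ∑ i, w i = 1) :
    pseudoDet (Qᵀ * (diagonal w)⁻¹ * Q) = (∏ i, (w i)⁻¹) * c ∧
      0 ≤ pseudoDet (Qᵀ * (diagonal w)⁻¹ * Q) := by
  classical
  set M : Matrix (Fin v) (Fin v) ℝ := Q * Qᵀ with hMdef
  set u : Fin v → ℝ := fun i => (w i)⁻¹ with hudef
  have hu : ∀ i, 0 < u i := fun i => inv_pos.mpr (hw i)
  have hdiaginv : (diagonal w)⁻¹ = diagonal u := by
    apply inv_eq_right_inv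
    rw [diagonal_mul_diagonal]
    have h : (fun i => w i * u i) = fun _ => (1:ℝ) := by
      funext i; exact mul_inv_cancel₀ (hw i).ne'
    rw [h, diagonal_one]
  set e : Fin v → ℝ := fun i => Real.sqrt (u i) with hedef
  have he : ∀ i, 0 < e i := fun i => Real.sqrt_pos.mpr (hu i)
  set E : Matrix (Fin v) (Fin v) ℝ := diagonal e with hEdef
  have hEE : E * E = diagonal u := by
    have h : (fun i => e i * e i) = u := funext fun i => Real.mul_self_sqrt (hu i).le
    rw [hEdef, diagonal_mul_diagonal, h]
  set B : Matrix (Fin v) (Fin s) ℝ := E * Q with hBdef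
  have hform : Qᵀ * (diagonal w)⁻¹ * Q = Bᵀ * B := by
    rw [hdiaginv, ← hEE, hBdef, transpose_mul, hEdef, diagonal_transpose]
    simp only [Matrix.mul_assoc]
  set S : Matrix (Fin v) (Fin v) ℝ := B * Bᵀ with hSdef
  have hfilter : ((Qᵀ * (diagonal w)⁻¹ * Q).charpoly.roots.filter (fun r => r ≠ 0))
      = (S.charpoly.roots.filter (fun r => r ≠ 0)) := by
    rw [hform]
    exact filter_roots_charpoly_mul_comm Bᵀ B
  have hS_psd : S.PosSemidef := by
    have h := Matrix.posSemidef_self_mul_conjTranspose B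
    have h2 : Bᴴ = Bᵀ := by simp
    rwa [h2] at h
  have hH : S.IsHermitian := hS_psd.1
  set μ : Fin v → ℝ := hH.eigenvalues with hmudef
  have hmu0 : ∀ i, 0 ≤ μ i := fun i => hS_psd.eigenvalues_nonneg i
  have hroots : S.charpoly.roots = Finset.univ.val.map μ := isHermitian_charpoly_roots hH
  have hdetE : IsUnit E.det := by
    rw [hEdef, det_diagonal]
    exact (Finset.prod_pos (fun i _ => he i)).ne'.isUnit
  have hrankS : S.rank = v - 1 := by
    rw [hSdef, Matrix.rank_self_mul_transpose, hBdef,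
      Matrix.rank_mul_eq_right_of_isUnit_det E Q hdetE, hrank]
  have hcardne : Fintype.card {i // μ i ≠ 0} = v - 1 := by
    rw [hH.rank_eq_card_non_zero_eigs] at hrankS
    exact hrankS
  set R : Multiset ℝ := Finset.univ.val.map μ with hRdef
  set R' : Multiset ℝ := R.filter (fun r => r ≠ 0) with hR'def
  have hcount : R.count 0 = 1 := by
    rw [hRdef, Multiset.count_map]
    have h1 : Multiset.card (Multiset.filter (fun a => 0 = μ a) Finset.univ.val)
        = Fintype.card {i // μ i = 0} := by
      rw [Fintype.card_subtype, ← Finset.filter_val]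
      congr 2
      ext i
      simp [eq_comm]
    rw [h1]
    have h2 : Fintype.card {i // μ i = 0} + Fintype.card {i // μ i ≠ 0} = v := by
      have h3 := Fintype.card_subtype_compl (fun i => μ i = 0)
      have hle := Fintype.card_subtype_le (fun i => μ i = 0)
      have hall : Fintype.card (Fin v) = v := Fintype.card_fin v
      have h4 : Fintype.card {i // ¬ μ i = 0} = Fintype.card {i // μ i ≠ 0} := rfl
      omega
    omega
  have hsplit : R = 0 ::ₘ R' := by
    have h0 : R.filter (fun r : ℝ => ¬ r ≠ 0) = Multiset.replicate 1 0 := by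
      have hp : R.filter (fun r : ℝ => ¬ r ≠ 0) = R.filter (fun r : ℝ => r = 0) := by
        apply Multiset.filter_congr
        intro x _
        simp
      rw [hp, Multiset.filter_eq', hcount]
    have hsum := Multiset.filter_add_not (fun r : ℝ => r ≠ 0) R
    rw [h0] at hsum
    have hcons : (0 : ℝ) ::ₘ R' = R' + Multiset.replicate 1 0 := by
      rw [Multiset.replicate_one, add_comm, Multiset.singleton_add]
    rw [hcons]
    exact hsum.symm
  have hcardR' : Multiset.card R' = v - 1 := by
    rw [hR'def, hRdef, Multiset.filter_map, Multiset.card_map]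
    have h1 : Multiset.filter ((fun r : ℝ => r ≠ 0) ∘ μ) Finset.univ.val
        = (Finset.univ.filter (fun i => μ i ≠ 0)).val := by
      rw [Finset.filter_val]
      rfl
    rw [h1]
    have h2 : (Finset.univ.filter (fun i => μ i ≠ 0)).card = Fintype.card {i // μ i ≠ 0} :=
      (Fintype.card_subtype _).symm
    rw [← h2] at hcardne
    exact hcardne
  have hcp : S.charpoly = (R.map (fun r => (X:ℝ[X]) - C r)).prod := by
    rw [isHermitian_charpoly hH, hRdef, Multiset.map_map]
    rfl
  have hcoeff1 : S.charpoly.coeff 1 = (-1:ℝ)^(v-1) * R'.prod := by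
    rw [hcp, hsplit, Multiset.map_cons, Multiset.prod_cons]
    have h0 : (X : ℝ[X]) - C 0 = X := by simp
    rw [h0]
    have h1 : ((X : ℝ[X]) * (R'.map (fun r => (X:ℝ[X]) - C r)).prod).coeff 1
        = ((R'.map (fun r => (X:ℝ[X]) - C r)).prod).coeff 0 := coeff_X_mul _ 0
    rw [h1, coeff_zero_eq_eval_zero]
    have h2 : Polynomial.eval 0 ((R'.map (fun r => (X:ℝ[X]) - C r)).prod)
        = ((R'.map (fun r => (X:ℝ[X]) - C r)).map (Polynomial.eval 0)).prod :=
      map_multiset_prod (Polynomial.evalRingHom (0:ℝ)) _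
    rw [h2, Multiset.map_map]
    have h3 : ((Polynomial.eval (0:ℝ)) ∘ (fun r : ℝ => (X:ℝ[X]) - C r)) = Neg.neg := by
      funext r; simp
    rw [h3, Multiset.prod_map_neg, hcardR']
  have hmapu : (diagonal u).map (C : ℝ →+* ℝ[X]) = diagonal (fun i => C (u i)) :=
    Matrix.diagonal_map (map_zero C)
  have hcp2 : S.charpoly
      = C (∏ i, u i)
        * det ((X:ℝ[X]) • (diagonal w).map (C : ℝ →+* ℝ[X]) - M.map (C : ℝ →+* ℝ[X])) := by
    have h1 : S.charpoly = (M * diagonal u).charpoly := by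
      have e1 : S = E * (Q * (Qᵀ * E)) := by
        rw [hSdef, hBdef, transpose_mul, hEdef, diagonal_transpose, ← hEdef]
        simp only [Matrix.mul_assoc]
      have e2 : (Q * (Qᵀ * E)) * E = M * diagonal u := by
        rw [hMdef, ← hEE]
        simp only [Matrix.mul_assoc]
      rw [e1, charpoly_comm, e2]
    have h2 : charmatrix (M * diagonal u)
        = ((X:ℝ[X]) • (diagonal w).map (C : ℝ →+* ℝ[X]) - M.map (C : ℝ →+* ℝ[X]))
          * (diagonal u).map (C : ℝ →+* ℝ[X]) := by
      rw [hmapu]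
      ext i j
      rw [Matrix.mul_diagonal]
      by_cases h : i = j
      · subst h
        rw [charmatrix_apply_eq]
        simp only [Matrix.sub_apply, Matrix.smul_apply, Matrix.map_apply, diagonal_apply_eq,
          Matrix.mul_diagonal, smul_eq_mul]
        rw [sub_mul, mul_assoc, ← C_mul, ← C_mul, mul_inv_cancel₀ (hw i).ne', C_1, mul_one]
      · rw [charmatrix_apply_ne _ _ _ h]
        simp only [Matrix.sub_apply, Matrix.smul_apply, Matrix.map_apply,
          diagonal_apply_ne _ h, Matrix.mul_diagonal, smul_eq_mul, map_zero, mul_zero,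
          zero_sub, neg_mul, ← C_mul]
    rw [h1, Matrix.charpoly, h2, det_mul, hmapu, det_diagonal, ← map_prod, mul_comm]
  have hc1 : S.charpoly.coeff 1 = (∏ i, u i) * ((-1:ℝ)^(v-1) * c) := by
    rw [hcp2, coeff_C_mul, coeff_one_det]
    congr 1
    have hnegadj : (-M).adjugate = ((-1:ℝ))^(v-1) • M.adjugate := by
      have hneg : (-M) = (-1:ℝ) • M := by rw [neg_one_smul]
      rw [hneg, Matrix.adjugate_smul, Fintype.card_fin]
    rw [hnegadj]
    simp only [Matrix.smul_apply, smul_eq_mul, hc]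
    rw [← Finset.sum_mul, hw1, one_mul]
  have hprodR' : R'.prod = (∏ i, u i) * c := by
    have h := hcoeff1.symm.trans hc1
    have hne : ((-1:ℝ))^(v-1) ≠ 0 := pow_ne_zero _ (by norm_num)
    apply mul_left_cancel₀ hne
    rw [h]
    ring
  have hpd : pseudoDet (Qᵀ * (diagonal w)⁻¹ * Q) = R'.prod := by
    unfold pseudoDet
    rw [hfilter, hroots]
  constructor
  · rw [hpd, hprodR']
  · rw [hpd]
    apply Multiset.prod_nonneg
    intro a ha
    have haR : a ∈ R := Multiset.mem_of_mem_filter ha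
    obtain ⟨i, _, hi⟩ := Multiset.mem_map.mp haR
    exact hi ▸ hmu0 i

/-- For a contrast matrix `Q` with `s ≥ v - 1` columns and `rank Q = v - 1`,
the uniform design minimizes the pseudo-determinant of `Qᵀ diag(w)⁻¹ Q` over all designs:
`Det(Qᵀ diag(w)⁻¹ Q) ≥ Det(Qᵀ diag(w̄)⁻¹ Q)` for every design `w`. -/
theorem stmt_4 (v s : ℕ) (hs : v - 1 ≤ s) (Q : Matrix (Fin v) (Fin s) ℝ)
    (hQ1 : Qᵀ *ᵥ (fun _ => (1 : ℝ)) = 0) (hrank : Q.rank = v - 1)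
    (w : Fin v → ℝ) (hw : ∀ i, 0 < w i) (hw1 : ∑ i, w i = 1) :
    pseudoDet (Qᵀ * (Matrix.diagonal w)⁻¹ * Q)
      ≥ pseudoDet (Qᵀ * (Matrix.diagonal (fun _ : Fin v => (v : ℝ)⁻¹))⁻¹ * Q) := by
  classical
  rcases Nat.eq_zero_or_pos v with h0 | hv
  · subst h0
    exact absurd hw1 (by simp)
  set M : Matrix (Fin v) (Fin v) ℝ := Q * Qᵀ with hMdef
  have hMT : Mᵀ = M := by rw [hMdef, transpose_mul, transpose_transpose]
  have hsym : ∀ a b, M a b = M b a := by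
    intro a b
    conv_lhs => rw [← hMT]
    rfl
  set ones : Fin v → ℝ := fun _ => (1:ℝ) with honesdef
  have hones_ne : ones ≠ 0 := by
    intro h
    have h2 := congrFun h ⟨0, hv⟩
    simp [honesdef] at h2
  have hMones : M *ᵥ ones = 0 := by
    rw [hMdef, ← Matrix.mulVec_mulVec, hQ1, Matrix.mulVec_zero]
  have hdetM : M.det = 0 := Matrix.exists_mulVec_eq_zero_iff.mp ⟨ones, hones_ne, hMones⟩
  set K := LinearMap.ker (Qᵀ : Matrix (Fin s) (Fin v) ℝ).mulVecLin with hKdef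
  have hones_mem : ones ∈ K := by
    rw [hKdef, LinearMap.mem_ker, Matrix.mulVecLin_apply]
    exact hQ1
  have hspanle : Submodule.span ℝ {ones} ≤ K := by
    rw [Submodule.span_le, Set.singleton_subset_iff]
    exact hones_mem
  have hfinK : Module.finrank ℝ K = 1 := by
    rw [hKdef]
    have h1 := LinearMap.finrank_range_add_finrank_ker
      ((Qᵀ : Matrix (Fin s) (Fin v) ℝ).mulVecLin)
    have h2 : Module.finrank ℝ (LinearMap.range (Qᵀ : Matrix (Fin s) (Fin v) ℝ).mulVecLin)
        = Qᵀ.rank := rfl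
    have h3 : Qᵀ.rank = v - 1 := by rw [Matrix.rank_transpose, hrank]
    have h4 : Module.finrank ℝ (Fin v → ℝ) = v := by
      simp [Module.finrank_fintype_fun_eq_card]
    rw [h2, h3, h4] at h1
    omega
  have hKspan : Submodule.span ℝ {ones} = K :=
    Submodule.eq_of_le_of_finrank_le hspanle
      (by rw [hfinK, finrank_span_singleton hones_ne])
  have hker : ∀ x : Fin v → ℝ, M *ᵥ x = 0 → ∃ t : ℝ, x = t • ones := by
    intro x hx
    have hQtx : Qᵀ *ᵥ x = 0 := by
      have h1 : (Qᵀ *ᵥ x) ⬝ᵥ (Qᵀ *ᵥ x) = x ⬝ᵥ (M *ᵥ x) := by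
        calc (Qᵀ *ᵥ x) ⬝ᵥ (Qᵀ *ᵥ x) = (x ᵥ* Q) ⬝ᵥ (Qᵀ *ᵥ x) := by
              rw [Matrix.mulVec_transpose]
          _ = x ⬝ᵥ (Q *ᵥ (Qᵀ *ᵥ x)) := (Matrix.dotProduct_mulVec x Q (Qᵀ *ᵥ x)).symm
          _ = x ⬝ᵥ (M *ᵥ x) := by rw [Matrix.mulVec_mulVec, ← hMdef]
      rw [hx, dotProduct_zero] at h1
      exact dotProduct_self_eq_zero.mp h1
    have hxK : x ∈ K := by
      rw [hKdef, LinearMap.mem_ker, Matrix.mulVecLin_apply]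
      exact hQtx
    rw [← hKspan] at hxK
    obtain ⟨t, ht⟩ := Submodule.mem_span_singleton.mp hxK
    exact ⟨t, ht.symm⟩
  have hMadj : M * M.adjugate = 0 := by rw [Matrix.mul_adjugate, hdetM, zero_smul]
  have hadjM : M.adjugate * M = 0 := by rw [Matrix.adjugate_mul, hdetM, zero_smul]
  have hcol : ∀ j, ∃ t, ∀ i, M.adjugate i j = t := by
    intro j
    have h2 : M *ᵥ (fun k => M.adjugate k j) = fun i => (M * M.adjugate) i j := by
      funext i
      simp [Matrix.mulVec, dotProduct, Matrix.mul_apply]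
    rw [hMadj] at h2
    have h3 : M *ᵥ (fun k => M.adjugate k j) = 0 := by
      rw [h2]
      funext i
      simp
    obtain ⟨t, ht⟩ := hker _ h3
    refine ⟨t, fun i => ?_⟩
    have h4 := congrFun ht i
    simpa [honesdef] using h4
  have hrow : ∀ i, ∃ t, ∀ j, M.adjugate i j = t := by
    intro i
    have h2 : M *ᵥ (fun k => M.adjugate i k) = fun j => (M.adjugate * M) i j := by
      funext j
      simp only [Matrix.mulVec, dotProduct, Matrix.mul_apply]
      refine Finset.sum_congr rfl (fun k _ => ?_)
      rw [hsym j k, mul_comm]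
    rw [hadjM] at h2
    have h3 : M *ᵥ (fun k => M.adjugate i k) = 0 := by
      rw [h2]
      funext j
      simp
    obtain ⟨t, ht⟩ := hker _ h3
    refine ⟨t, fun j => ?_⟩
    have h4 := congrFun ht j
    simpa [honesdef] using h4
  set i0 : Fin v := ⟨0, hv⟩ with hi0def
  set c : ℝ := M.adjugate i0 i0 with hcdef
  have hc : ∀ i j, (Q * Qᵀ).adjugate i j = c := by
    intro i j
    obtain ⟨t, htc⟩ := hcol j
    obtain ⟨t2, htr⟩ := hrow i0
    calc (Q * Qᵀ).adjugate i j = t := htc i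
      _ = M.adjugate i0 j := (htc i0).symm
      _ = t2 := htr j
      _ = M.adjugate i0 i0 := (htr i0).symm
  obtain ⟨hPw, hPw0⟩ := key v s hv Q hrank c hc w hw hw1
  set wb : Fin v → ℝ := fun _ => (v:ℝ)⁻¹ with hwbdef
  have hvR : (0:ℝ) < v := Nat.cast_pos.mpr hv
  have hwb : ∀ i, 0 < wb i := fun _ => inv_pos.mpr hvR
  have hwb1 : ∑ i, wb i = 1 := by
    rw [hwbdef, Finset.sum_const, Finset.card_univ, Fintype.card_fin, nsmul_eq_mul]
    exact mul_inv_cancel₀ hvR.ne'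
  obtain ⟨hPu, hPu0⟩ := key v s hv Q hrank c hc wb hwb hwb1
  have hprod_u : (∏ _i : Fin v, ((v:ℝ)⁻¹)⁻¹) = (v:ℝ)^v := by
    simp [inv_inv, Finset.prod_const, Finset.card_univ]
  rw [hprod_u] at hPu
  have hc0 : 0 ≤ c := by
    rw [hPu] at hPu0
    by_contra h
    push_neg at h
    nlinarith [pow_pos hvR v]
  have hprodw_pos : 0 < ∏ i, w i := Finset.prod_pos (fun i _ => hw i)
  have hamgm : (∏ i, w i) ≤ ((v:ℝ)⁻¹)^v := by
    have h1 := Real.geom_mean_le_arith_mean_weighted Finset.univ (fun _ => (v:ℝ)⁻¹) w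
      (fun i _ => (inv_pos.mpr hvR).le) hwb1 (fun i _ => (hw i).le)
    have h2 : ∑ i, (v:ℝ)⁻¹ * w i = (v:ℝ)⁻¹ := by
      rw [← Finset.mul_sum, hw1, mul_one]
    rw [h2, Real.finset_prod_rpow _ _ (fun i _ => (hw i).le) _] at h1
    have h3 : ((∏ i, w i) ^ ((v:ℝ)⁻¹)) ^ (v:ℕ) ≤ ((v:ℝ)⁻¹)^(v:ℕ) :=
      pow_le_pow_left₀ (Real.rpow_nonneg hprodw_pos.le _) h1 v
    rwa [← Real.rpow_natCast ((∏ i, w i) ^ ((v:ℝ)⁻¹)) v, ← Real.rpow_mul hprodw_pos.le,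
      inv_mul_cancel₀ (Nat.cast_ne_zero.mpr hv.ne'), Real.rpow_one] at h3
  have hprodinv : (v:ℝ)^v ≤ ∏ i, (w i)⁻¹ := by
    rw [Finset.prod_inv_distrib,
      show ((v:ℝ))^v = (((v:ℝ)⁻¹)^v)⁻¹ by rw [← inv_pow, inv_inv]]
    exact inv_anti₀ hprodw_pos hamgm
  rw [ge_iff_le, hPw, hPu]
  exact mul_le_mul_of_nonneg_right hprodinv hc0
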